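/- Let n ≥ 1, p ∈ (0,1) and s ∈ ℕ ∪ {0} with s ≥ ⌊n(1/p-1)⌋. There exists a constant C ≥ 1, independent of the ball, such that for every ball B ⊂ ℝ^n: if a is a (Φ_p,∞,s)-atom associated with B then C^{-1}a is a (p,∞,s)_{W_p}-atom associated with B, and conversely if a is a (p,∞,s)_{W_p}-atom associated with B then C^{-1}a is a (Φ_p,∞,s)-atom associated with B. -/

import Mathlib

open MeasureTheory Real
open scoped ENNReal Classical

noncomputable section

/-- `ℝⁿ` as a Euclidean space. -/
abbrev Rn (n : ℕ) := EuclideanSpace ℝ (Fin n)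

/-- The Musielak-Orlicz growth function `Φ_p`. -/
def Phi (n : ℕ) (p : ℝ) (x : Rn n) (t : ℝ) : ℝ :=
  if ∃ k : ℕ, (n : ℝ) * (1 / p - 1) = (k : ℝ) then
    t / (Real.log (Real.exp 1 + t) +
      (t * (1 + ‖x‖) ^ (n : ℝ)) ^ (1 - p) * (Real.log (Real.exp 1 + ‖x‖)) ^ p)
  else
    t / (Real.log (Real.exp 1 + t) + (t * (1 + ‖x‖) ^ (n : ℝ)) ^ (1 - p))

/-- The Orlicz function `φ₀(t) = t / log(e+t)`. -/
def phi0 (t : ℝ) : ℝ := t / Real.log (Real.exp 1 + t)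

/-- The weight `W_p`. -/
def Wp (n : ℕ) (p : ℝ) (x : Rn n) : ℝ :=
  if p = 1 then 1 / Real.log (Real.exp 1 + ‖x‖)
  else if ∃ k : ℕ, (n : ℝ) * (1 / p - 1) = (k : ℝ) then
    (1 + ‖x‖) ^ (-(n : ℝ) * (1 - p)) * (Real.log (Real.exp 1 + ‖x‖)) ^ (-p)
  else (1 + ‖x‖) ^ (-(n : ℝ) * (1 - p))

/-- Extension of `Φ_p(x, ·)` to `ℝ≥0∞`. -/
def PhiE (n : ℕ) (p : ℝ) (x : Rn n) (t : ℝ≥0∞) : ℝ≥0∞ :=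
  if t = ⊤ then ⊤ else ENNReal.ofReal (Phi n p x t.toReal)

/-- Extension of `φ₀` to `ℝ≥0∞`. -/
def phi0E (t : ℝ≥0∞) : ℝ≥0∞ :=
  if t = ⊤ then ⊤ else ENNReal.ofReal (phi0 t.toReal)

/-- The Luxemburg quasi-norm `‖·‖_{L^{Φ_p}}`. -/
def luxPhiNorm (n : ℕ) (p : ℝ) (F : Rn n → ℝ≥0∞) : ℝ≥0∞ :=
  sInf {lam : ℝ≥0∞ | 0 < lam ∧ (∫⁻ x : Rn n, PhiE n p x (F x / lam)) ≤ 1}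

/-- The Luxemburg norm `‖·‖_{L^{φ₀}}`. -/
def luxPhi0Norm (n : ℕ) (F : Rn n → ℝ≥0∞) : ℝ≥0∞ :=
  sInf {lam : ℝ≥0∞ | 0 < lam ∧ (∫⁻ x : Rn n, phi0E (F x / lam)) ≤ 1}

/-- The weighted quasi-norm `‖·‖_{L^p_{W_p}}`. -/
def wNorm (n : ℕ) (p : ℝ) (F : Rn n → ℝ≥0∞) : ℝ≥0∞ :=
  (∫⁻ x : Rn n, F x ^ p * ENNReal.ofReal (Wp n p x)) ^ (1 / p)

/-- The weighted norm `‖·‖_{L^1_{W_1}}`. -/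
def w1Norm (n : ℕ) (F : Rn n → ℝ≥0∞) : ℝ≥0∞ :=
  ∫⁻ x : Rn n, F x * ENNReal.ofReal (Wp n 1 x)

/-- The characteristic function of a set, `ℝ≥0∞`-valued. -/
def chi (n : ℕ) (B : Set (Rn n)) : Rn n → ℝ≥0∞ := B.indicator fun _ => 1


/-- An `(X, ∞, s)`-atom associated with the set `B`, where `normB` is `‖χ_B‖_X`:
a measurable function supported in `B`, bounded by `‖χ_B‖_X⁻¹`, with vanishing
moments up to order `s`. -/
def IsAtom' (n s : ℕ) (normB : ℝ≥0∞) (B : Set (Rn n)) (a : Rn n → ℂ) : Prop :=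
  Measurable a ∧ (∀ x, x ∉ B → a x = 0) ∧
  (∀ᵐ x : Rn n, (‖a x‖₊ : ℝ≥0∞) ≤ normB⁻¹) ∧
  ∀ α : Fin n → ℕ, (∑ i, α i) ≤ s →
    (∫ x : Rn n, a x * ∏ i, ((x i : ℝ) : ℂ) ^ (α i)) = 0


namespace S13

variable {n : ℕ} {p : ℝ}

/-- The slowly varying factor. -/
def Lf (n : ℕ) (p : ℝ) (x : Rn n) : ℝ :=
  if ∃ k : ℕ, (n : ℝ) * (1 / p - 1) = (k : ℝ) then (Real.log (Real.exp 1 + ‖x‖)) ^ p else 1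

lemma one_le_log_exp_add {u : ℝ} (hu : 0 ≤ u) : 1 ≤ Real.log (Real.exp 1 + u) := by
  have h := Real.log_le_log (Real.exp_pos 1) (by linarith : Real.exp 1 ≤ Real.exp 1 + u)
  rwa [Real.log_exp] at h

lemma one_le_Lf (hp0 : 0 ≤ p) (x : Rn n) : 1 ≤ Lf n p x := by
  unfold Lf
  split_ifs with h
  · have h1 : (1:ℝ) ≤ Real.log (Real.exp 1 + ‖x‖) := one_le_log_exp_add (norm_nonneg x)
    calc (1:ℝ) = 1 ^ p := (Real.one_rpow p).symm
    _ ≤ (Real.log (Real.exp 1 + ‖x‖)) ^ p := Real.rpow_le_rpow zero_le_one h1 hp0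
  · exact le_refl 1

lemma one_le_base (x : Rn n) : (1:ℝ) ≤ 1 + ‖x‖ := by
  have := norm_nonneg x; linarith

lemma one_le_A (hn : 0 ≤ (n:ℝ) * (1 - p)) (hp0 : 0 ≤ p) (x : Rn n) :
    1 ≤ (1 + ‖x‖) ^ ((n : ℝ) * (1 - p)) * Lf n p x := by
  have h1 : (1:ℝ) ≤ (1 + ‖x‖) ^ ((n : ℝ) * (1 - p)) := by
    calc (1:ℝ) = 1 ^ ((n : ℝ) * (1 - p)) := (Real.one_rpow _).symm
    _ ≤ (1 + ‖x‖) ^ ((n : ℝ) * (1 - p)) := Real.rpow_le_rpow zero_le_one (one_le_base x) hn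
  calc (1:ℝ) = 1 * 1 := (one_mul 1).symm
  _ ≤ _ := mul_le_mul h1 (one_le_Lf hp0 x) zero_le_one (by linarith)

lemma Wp_eq_inv (hp1 : p ≠ 1) (x : Rn n) :
    Wp n p x = ((1 + ‖x‖) ^ ((n : ℝ) * (1 - p)) * Lf n p x)⁻¹ := by
  have hb : (0:ℝ) ≤ 1 + ‖x‖ := by have := norm_nonneg x; linarith
  have hl : (0:ℝ) ≤ Real.log (Real.exp 1 + ‖x‖) := by
    have := one_le_log_exp_add (norm_nonneg x); linarith
  unfold Wp Lf
  rw [if_neg hp1]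
  split_ifs with h
  · rw [mul_inv, neg_mul, Real.rpow_neg hb, Real.rpow_neg hl]
  · rw [mul_one, neg_mul, Real.rpow_neg hb]

lemma Wp_pos (hn : 0 ≤ (n:ℝ) * (1 - p)) (hp0 : 0 ≤ p) (hp1 : p ≠ 1) (x : Rn n) :
    0 < Wp n p x := by
  rw [Wp_eq_inv hp1 x]
  have := one_le_A hn hp0 x
  positivity

lemma Wp_le_one (hn : 0 ≤ (n:ℝ) * (1 - p)) (hp0 : 0 ≤ p) (hp1 : p ≠ 1) (x : Rn n) :
    Wp n p x ≤ 1 := by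
  rw [Wp_eq_inv hp1 x]
  exact inv_le_one_of_one_le₀ (one_le_A hn hp0 x)

lemma Wp_le_pow (hn : 0 ≤ (n:ℝ) * (1 - p)) (hp0 : 0 ≤ p) (hp1 : p ≠ 1) (x : Rn n) :
    Wp n p x ≤ (1 + ‖x‖) ^ (-((n : ℝ) * (1 - p))) := by
  have hb : (0:ℝ) < 1 + ‖x‖ := by have := norm_nonneg x; linarith
  rw [Wp_eq_inv hp1 x, Real.rpow_neg hb.le]
  have hA : 0 < (1 + ‖x‖) ^ ((n : ℝ) * (1 - p)) := Real.rpow_pos_of_pos hb _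
  rw [mul_inv]
  have h2 : (Lf n p x)⁻¹ ≤ 1 := inv_le_one_of_one_le₀ (one_le_Lf hp0 x)
  calc ((1 + ‖x‖) ^ ((n : ℝ) * (1 - p)))⁻¹ * (Lf n p x)⁻¹
      ≤ ((1 + ‖x‖) ^ ((n : ℝ) * (1 - p)))⁻¹ * 1 :=
        mul_le_mul_of_nonneg_left h2 (by positivity)
  _ = _ := mul_one _

lemma Phi_eq (hp1 : p ≠ 1) (x : Rn n) {t : ℝ} (ht : 0 ≤ t) :
    Phi n p x t = t / (Real.log (Real.exp 1 + t) + t ^ (1 - p) / Wp n p x) := by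
  have hb : (0:ℝ) ≤ 1 + ‖x‖ := by have := norm_nonneg x; linarith
  have key : (t * (1 + ‖x‖) ^ (n : ℝ)) ^ (1 - p)
      = t ^ (1 - p) * (1 + ‖x‖) ^ ((n : ℝ) * (1 - p)) := by
    rw [Real.mul_rpow ht (Real.rpow_nonneg hb _), ← Real.rpow_mul hb]
  rw [Wp_eq_inv hp1 x, div_inv_eq_mul]
  unfold Phi Lf
  split_ifs with h
  · rw [key]; ring_nf
  · rw [key]; ring_nf

end S13

namespace S13

variable {n : ℕ} {p : ℝ}

/-- Upper bound: `Φ(x,t) ≤ t^p W(x)`. -/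
lemma Phi_le (hn : 0 ≤ (n:ℝ) * (1 - p)) (hp0 : 0 < p) (hp1 : p < 1) (x : Rn n)
    {t : ℝ} (ht : 0 ≤ t) : Phi n p x t ≤ t ^ p * Wp n p x := by
  rcases eq_or_lt_of_le ht with h | h
  · rw [Phi_eq hp1.ne x ht, ← h, zero_div]
    have := Wp_pos hn hp0.le hp1.ne x
    positivity
  · have hW := Wp_pos hn hp0.le hp1.ne x
    have hden : 0 < t ^ (1 - p) / Wp n p x := by positivity
    have hlog : 0 ≤ Real.log (Real.exp 1 + t) := by
      have := one_le_log_exp_add ht; linarith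
    rw [Phi_eq hp1.ne x ht]
    rw [div_le_iff₀ (by linarith)]
    have h1 : t ^ p * t ^ (1 - p) = t := by rw [← Real.rpow_add h]; norm_num
    have key : t ^ p * Wp n p x * (t ^ (1 - p) / Wp n p x) = t := by
      calc t ^ p * Wp n p x * (t ^ (1 - p) / Wp n p x)
          = t ^ p * t ^ (1 - p) * (Wp n p x / Wp n p x) := by ring
      _ = t := by rw [div_self hW.ne', mul_one, h1]
    calc t = t ^ p * Wp n p x * (t ^ (1 - p) / Wp n p x) := key.symm
    _ ≤ t ^ p * Wp n p x * (Real.log (Real.exp 1 + t) + t ^ (1 - p) / Wp n p x) := by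
        apply mul_le_mul_of_nonneg_left (by linarith) (by positivity)

/-- The constant in the lower bound. -/
def Kc (p : ℝ) : ℝ := (Real.exp 1 + 1) / (1 - p)

lemma Kc_pos (hp1 : p < 1) : 0 < Kc p := by
  have := Real.exp_pos 1
  have h1p : (0:ℝ) < 1 - p := by linarith
  unfold Kc; positivity

lemma log_mul_min_le (hp0 : 0 ≤ p) (hp1 : p < 1) {t : ℝ} (ht : 0 < t) :
    Real.log (Real.exp 1 + t) * min (t ^ (1 - p)) 1 ≤ Kc p * t ^ (1 - p) := by
  have he : (0:ℝ) < Real.exp 1 := Real.exp_pos 1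
  have h1p : (0:ℝ) < 1 - p := by linarith
  rcases le_total 1 t with h | h
  · have hmin : min (t ^ (1 - p)) 1 = 1 := by
      apply min_eq_right
      calc (1:ℝ) = 1 ^ (1 - p) := (Real.one_rpow _).symm
      _ ≤ t ^ (1 - p) := Real.rpow_le_rpow zero_le_one h h1p.le
    rw [hmin, mul_one]
    have h2 : Real.log (Real.exp 1 + t) ≤ (Real.exp 1 + t) ^ (1 - p) / (1 - p) :=
      Real.log_le_rpow_div (by linarith) h1p
    have h3 : (Real.exp 1 + t) ^ (1 - p) ≤ ((Real.exp 1 + 1) * t) ^ (1 - p) := by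
      apply Real.rpow_le_rpow (by linarith) _ h1p.le
      nlinarith
    have h4 : ((Real.exp 1 + 1) * t) ^ (1 - p)
        = (Real.exp 1 + 1) ^ (1 - p) * t ^ (1 - p) :=
      Real.mul_rpow (by linarith) ht.le
    have h5 : (Real.exp 1 + 1) ^ (1 - p) ≤ Real.exp 1 + 1 := by
      calc (Real.exp 1 + 1) ^ (1 - p) ≤ (Real.exp 1 + 1) ^ (1:ℝ) :=
        Real.rpow_le_rpow_of_exponent_le (by linarith) (by linarith)
      _ = Real.exp 1 + 1 := Real.rpow_one _
    have ht1p : 0 ≤ t ^ (1 - p) := Real.rpow_nonneg ht.le _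
    calc Real.log (Real.exp 1 + t) ≤ (Real.exp 1 + t) ^ (1 - p) / (1 - p) := h2
    _ ≤ ((Real.exp 1 + 1) ^ (1 - p) * t ^ (1 - p)) / (1 - p) := by
        apply div_le_div_of_nonneg_right _ h1p.le  -- may need name fix
        rw [← h4]; exact h3
    _ ≤ ((Real.exp 1 + 1) * t ^ (1 - p)) / (1 - p) := by
        apply div_le_div_of_nonneg_right _ h1p.le
        exact mul_le_mul_of_nonneg_right h5 ht1p
    _ = Kc p * t ^ (1 - p) := by unfold Kc; ring
  · have hlog : Real.log (Real.exp 1 + t) ≤ Real.exp 1 + 1 := by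
      calc Real.log (Real.exp 1 + t) ≤ Real.exp 1 + t := Real.log_le_self (by linarith)
      _ ≤ Real.exp 1 + 1 := by linarith
    have hK : Real.exp 1 + 1 ≤ Kc p := by
      rw [Kc, le_div_iff₀ h1p]
      nlinarith [mul_nonneg (by positivity : (0:ℝ) ≤ Real.exp 1 + 1) hp0]
    have hlog0 : 0 ≤ Real.log (Real.exp 1 + t) := by
      have := one_le_log_exp_add ht.le; linarith
    calc Real.log (Real.exp 1 + t) * min (t ^ (1 - p)) 1
        ≤ (Real.exp 1 + 1) * t ^ (1 - p) :=
          mul_le_mul hlog (min_le_left _ _)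
            (le_min (Real.rpow_nonneg ht.le _) zero_le_one) (by positivity)
    _ ≤ Kc p * t ^ (1 - p) := by
        apply mul_le_mul_of_nonneg_right hK (Real.rpow_nonneg ht.le _)

/-- Lower bound: `Φ(x,t) ≥ (K+1)⁻¹ min(t^{1-p}, W(x)) t^p`. -/
lemma Phi_ge (hn : 0 ≤ (n:ℝ) * (1 - p)) (hp0 : 0 < p) (hp1 : p < 1) (x : Rn n)
    {t : ℝ} (ht : 0 < t) :
    (Kc p + 1)⁻¹ * (min (t ^ (1 - p)) (Wp n p x) * t ^ p) ≤ Phi n p x t := by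
  have hW := Wp_pos hn hp0.le hp1.ne x
  have hW1 := Wp_le_one hn hp0.le hp1.ne x
  have hK := Kc_pos hp1
  set m := min (t ^ (1 - p)) (Wp n p x) with hm
  have hm0 : 0 < m := lt_min (Real.rpow_pos_of_pos ht _) hW
  have hmW : m ≤ Wp n p x := min_le_right _ _
  have hmt : m ≤ t ^ (1 - p) := min_le_left _ _
  have hm1 : m ≤ min (t ^ (1 - p)) 1 := le_min hmt (hmW.trans hW1)
  have hlog0 : 0 ≤ Real.log (Real.exp 1 + t) := by
    have := one_le_log_exp_add ht.le; linarith
  set D := Real.log (Real.exp 1 + t) + t ^ (1 - p) / Wp n p x with hD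
  have hD0 : 0 < D := by
    have : 0 < t ^ (1 - p) / Wp n p x := by positivity
    rw [hD]; linarith
  have hmD : m * D ≤ (Kc p + 1) * t ^ (1 - p) := by
    have h1 : m * Real.log (Real.exp 1 + t) ≤ Kc p * t ^ (1 - p) := by
      calc m * Real.log (Real.exp 1 + t)
          ≤ min (t ^ (1 - p)) 1 * Real.log (Real.exp 1 + t) :=
            mul_le_mul_of_nonneg_right hm1 hlog0
      _ = Real.log (Real.exp 1 + t) * min (t ^ (1 - p)) 1 := mul_comm _ _
      _ ≤ Kc p * t ^ (1 - p) := log_mul_min_le hp0.le hp1 ht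
    have h2 : m * (t ^ (1 - p) / Wp n p x) ≤ t ^ (1 - p) := by
      rw [mul_div_assoc', div_le_iff₀ hW]
      have ht1p : 0 ≤ t ^ (1 - p) := Real.rpow_nonneg ht.le _
      calc m * t ^ (1 - p) ≤ Wp n p x * t ^ (1 - p) :=
        mul_le_mul_of_nonneg_right hmW ht1p
      _ = t ^ (1 - p) * Wp n p x := mul_comm _ _
    calc m * D = m * Real.log (Real.exp 1 + t) + m * (t ^ (1 - p) / Wp n p x) := by
          rw [hD]; ring
    _ ≤ Kc p * t ^ (1 - p) + t ^ (1 - p) := add_le_add h1 h2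
    _ = (Kc p + 1) * t ^ (1 - p) := by ring
  rw [Phi_eq hp1.ne x ht.le, ← hD, le_div_iff₀ hD0]
  have key : (Kc p + 1)⁻¹ * (m * t ^ p) * D = (Kc p + 1)⁻¹ * t ^ p * (m * D) := by ring
  rw [key]
  calc (Kc p + 1)⁻¹ * t ^ p * (m * D)
      ≤ (Kc p + 1)⁻¹ * t ^ p * ((Kc p + 1) * t ^ (1 - p)) := by
        apply mul_le_mul_of_nonneg_left hmD (by positivity)
  _ = (Kc p + 1)⁻¹ * (Kc p + 1) * (t ^ p * t ^ (1 - p)) := by ring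
  _ = t := by
      rw [inv_mul_cancel₀ (by linarith), one_mul, ← Real.rpow_add ht]
      norm_num

end S13

namespace S13

open Metric

variable {n : ℕ} {p : ℝ}

/-- Dyadic bound for the integral of `(1+‖x‖)^(-α)` over balls of radius `2^J`. -/
lemma ball_int_dyadic (hn : 1 ≤ n) (hp0 : 0 < p) (hp1 : p < 1) :
    ∃ CK : ℝ≥0∞, CK ≠ ⊤ ∧ ∀ J : ℕ,
      ∫⁻ x in ball (0 : Rn n) ((2:ℝ) ^ (J:ℝ)),
          ENNReal.ofReal ((1 + ‖x‖) ^ (-((n:ℝ) * (1 - p))))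
        ≤ CK * ENNReal.ofReal (((2:ℝ) ^ (J:ℝ)) ^ ((n:ℝ) * p)) := by
  set α : ℝ := (n:ℝ) * (1 - p) with hα
  have hα0 : 0 < α := by
    have : (0:ℝ) < (n:ℝ) := by exact_mod_cast hn
    have : (0:ℝ) < 1 - p := by linarith
    positivity
  set q : ℝ := (2:ℝ) ^ ((n:ℝ) * p) with hq
  have hnp0 : 0 < (n:ℝ) * p := by
    have : (0:ℝ) < (n:ℝ) := by exact_mod_cast hn
    positivity
  have hq1 : 1 < q := Real.one_lt_rpow_iff_of_pos (by norm_num) |>.mpr (Or.inl ⟨by norm_num, hnp0⟩)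
  set K : ℝ := 1 + 1 / (q - 1) with hK
  have hq1' : (0:ℝ) < q - 1 := by linarith
  have hK1 : 1 ≤ K := by
    rw [hK]
    exact le_add_of_nonneg_right (by positivity)
  set V : ℝ≥0∞ := volume (ball (0 : Rn n) 1) with hV
  have hVtop : V ≠ ⊤ := (measure_ball_lt_top).ne
  refine ⟨V * ENNReal.ofReal (2 ^ n * K), by
    exact ENNReal.mul_ne_top hVtop ENNReal.ofReal_ne_top, ?_⟩
  intro J
  induction J with
  | zero =>
    -- integral over ball of radius 1 is at most V
    have h1 : ∫⁻ x in ball (0 : Rn n) ((2:ℝ) ^ ((0:ℕ):ℝ)),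
        ENNReal.ofReal ((1 + ‖x‖) ^ (-α)) ≤ V := by
      have hb : ((2:ℝ) ^ ((0:ℕ):ℝ)) = 1 := by norm_num
      rw [hb]
      calc ∫⁻ x in ball (0 : Rn n) 1, ENNReal.ofReal ((1 + ‖x‖) ^ (-α))
          ≤ ∫⁻ _ in ball (0 : Rn n) 1, 1 := by
            apply setLIntegral_mono measurable_const
            intro x _
            rw [show (1:ℝ≥0∞) = ENNReal.ofReal 1 by simp]
            apply ENNReal.ofReal_le_ofReal
            have hx : (1:ℝ) ≤ 1 + ‖x‖ := one_le_base x
            calc (1 + ‖x‖) ^ (-α) ≤ 1 ^ (-α) :=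
              Real.rpow_le_rpow_of_nonpos one_pos hx (by linarith)
            _ = 1 := Real.one_rpow _
      _ = V := by rw [setLIntegral_const, one_mul]
    refine h1.trans ?_
    have h2 : (1:ℝ≥0∞) ≤ ENNReal.ofReal (2 ^ n * K * ((2:ℝ) ^ ((0:ℕ):ℝ)) ^ ((n:ℝ) * p)) := by
      rw [show ((2:ℝ) ^ ((0:ℕ):ℝ)) = 1 by norm_num, Real.one_rpow, mul_one]
      rw [ENNReal.one_le_ofReal]
      have h2n : (1:ℝ) ≤ 2 ^ n := one_le_pow₀ (by norm_num)
      nlinarith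
    calc V = V * 1 := (mul_one V).symm
    _ ≤ V * (ENNReal.ofReal (2 ^ n * K) * ENNReal.ofReal (((2:ℝ) ^ ((0:ℕ):ℝ)) ^ ((n:ℝ) * p))) := by
        rw [← ENNReal.ofReal_mul (by positivity)]
        exact mul_le_mul_right h2 V
    _ = V * ENNReal.ofReal (2 ^ n * K) * ENNReal.ofReal (((2:ℝ) ^ ((0:ℕ):ℝ)) ^ ((n:ℝ) * p)) := by
        rw [mul_assoc]
  | succ J ih =>
    set b : ℝ := (2:ℝ) ^ (J:ℝ) with hb
    have hb0 : (0:ℝ) < b := Real.rpow_pos_of_pos (by norm_num) _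
    have hb1 : (1:ℝ) ≤ b := by
      rw [hb]
      calc (1:ℝ) = 1 ^ (J:ℝ) := (Real.one_rpow _).symm
      _ ≤ 2 ^ (J:ℝ) := Real.rpow_le_rpow zero_le_one (by norm_num) (by positivity)
    have hbs : (2:ℝ) ^ (((J+1:ℕ)):ℝ) = 2 * b := by
      rw [hb]
      push_cast
      rw [Real.rpow_add (by norm_num : (0:ℝ) < 2), Real.rpow_one]
      ring
    have hsub : ball (0:Rn n) b ⊆ ball (0:Rn n) (2*b) :=
      ball_subset_ball (by linarith)
    have hsplit : ball (0:Rn n) (2*b) =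
        ball (0:Rn n) b ∪ (ball (0:Rn n) (2*b) \ ball (0:Rn n) b) :=
      (Set.union_diff_cancel hsub).symm
    have hdiffint : ∫⁻ x in (ball (0:Rn n) (2*b) \ ball (0:Rn n) b),
        ENNReal.ofReal ((1 + ‖x‖) ^ (-α)) ≤ V * ENNReal.ofReal (2^n * b ^ ((n:ℝ)*p)) := by
      have hbound : ∀ x ∈ (ball (0:Rn n) (2*b) \ ball (0:Rn n) b),
          ENNReal.ofReal ((1 + ‖x‖) ^ (-α)) ≤ ENNReal.ofReal (b ^ (-α)) := by
        intro x hx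
        apply ENNReal.ofReal_le_ofReal
        have hxb : b ≤ ‖x - 0‖ := by
          have := hx.2
          rw [mem_ball] at this
          push_neg at this
          simpa [dist_eq_norm] using this
        have hxb' : b ≤ 1 + ‖x‖ := by
          rw [sub_zero] at hxb
          have := norm_nonneg x; linarith
        exact Real.rpow_le_rpow_of_nonpos hb0 hxb' (by linarith)
      calc ∫⁻ x in (ball (0:Rn n) (2*b) \ ball (0:Rn n) b),
          ENNReal.ofReal ((1 + ‖x‖) ^ (-α))
          ≤ ∫⁻ _ in (ball (0:Rn n) (2*b) \ ball (0:Rn n) b),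
              ENNReal.ofReal (b ^ (-α)) := setLIntegral_mono measurable_const hbound
      _ = ENNReal.ofReal (b ^ (-α)) * volume (ball (0:Rn n) (2*b) \ ball (0:Rn n) b) :=
          setLIntegral_const _ _
      _ ≤ ENNReal.ofReal (b ^ (-α)) * volume (ball (0:Rn n) (2*b)) :=
          mul_le_mul_right (measure_mono Set.diff_subset) _
      _ = ENNReal.ofReal (b ^ (-α)) * (ENNReal.ofReal ((2*b) ^ n) * V) := by
          rw [MeasureTheory.Measure.addHaar_ball_of_pos volume (0:Rn n) (by linarith : (0:ℝ) < 2*b)]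
          congr 2
          simp [finrank_euclideanSpace_fin]
      _ = V * ENNReal.ofReal (b ^ (-α) * (2*b) ^ n) := by
          rw [ENNReal.ofReal_mul (by positivity)]
          ring
      _ = V * ENNReal.ofReal (2^n * b ^ ((n:ℝ)*p)) := by
          congr 1
          apply congrArg
          rw [mul_pow, ← Real.rpow_natCast b n, ← mul_assoc, mul_comm (b ^ (-α)) ((2:ℝ)^n),
            mul_assoc, ← Real.rpow_add hb0]
          congr 1
          rw [hα]; ring
    have hmain : ∫⁻ x in ball (0 : Rn n) ((2:ℝ) ^ (((J+1:ℕ)):ℝ)),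
        ENNReal.ofReal ((1 + ‖x‖) ^ (-α))
        ≤ V * ENNReal.ofReal (2^n * K * b ^ ((n:ℝ)*p)) + V * ENNReal.ofReal (2^n * b ^ ((n:ℝ)*p)) := by
      rw [hbs, hsplit, lintegral_union (measurableSet_ball.diff measurableSet_ball)
        Set.disjoint_sdiff_right]
      refine add_le_add (ih.trans (le_of_eq ?_)) hdiffint
      rw [mul_assoc, ← ENNReal.ofReal_mul (by positivity)]
    refine hmain.trans ?_
    have hKq : K * (q - 1) = q := by
      rw [hK]; field_simp; ring
    have hfinal : 2^n * K * b ^ ((n:ℝ)*p) + 2^n * b ^ ((n:ℝ)*p)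
        ≤ 2^n * K * (((2:ℝ) ^ (((J+1:ℕ)):ℝ)) ^ ((n:ℝ)*p)) := by
      rw [hbs, Real.mul_rpow (by norm_num) hb0.le, ← hq]
      have hbnp : (0:ℝ) ≤ b ^ ((n:ℝ)*p) := by positivity
      have h2n : (0:ℝ) < 2^n := by positivity
      have hKK : K + 1 ≤ K * q := by nlinarith
      nlinarith [mul_nonneg (mul_nonneg h2n.le hbnp) (by linarith : (0:ℝ) ≤ q - 1)]
    calc V * ENNReal.ofReal (2^n * K * b ^ ((n:ℝ)*p)) + V * ENNReal.ofReal (2^n * b ^ ((n:ℝ)*p))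
        = V * ENNReal.ofReal (2^n * K * b ^ ((n:ℝ)*p) + 2^n * b ^ ((n:ℝ)*p)) := by
          rw [← mul_add, ← ENNReal.ofReal_add (by positivity) (by positivity)]
    _ ≤ V * ENNReal.ofReal (2^n * K * (((2:ℝ) ^ (((J+1:ℕ)):ℝ)) ^ ((n:ℝ)*p))) :=
          mul_le_mul_right (ENNReal.ofReal_le_ofReal hfinal) V
    _ = V * ENNReal.ofReal (2^n * K) * ENNReal.ofReal (((2:ℝ) ^ (((J+1:ℕ)):ℝ)) ^ ((n:ℝ)*p)) := by
          rw [ENNReal.ofReal_mul (show (0:ℝ) ≤ 2^n * K by positivity), ← mul_assoc]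

end S13

namespace S13

open Metric

variable {n : ℕ} {p : ℝ}

lemma ball_int_bound (hn : 1 ≤ n) (hp0 : 0 < p) (hp1 : p < 1) :
    ∃ C5 : ℝ≥0∞, C5 ≠ ⊤ ∧ ∀ R : ℝ, 1 ≤ R →
      ∫⁻ x in ball (0 : Rn n) R, ENNReal.ofReal ((1 + ‖x‖) ^ (-((n:ℝ) * (1 - p))))
        ≤ C5 * ENNReal.ofReal (R ^ ((n:ℝ) * p)) := by
  obtain ⟨CK, hCK, h⟩ := ball_int_dyadic hn hp0 hp1
  have hnp0 : 0 ≤ (n:ℝ) * p := by positivity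
  refine ⟨CK * ENNReal.ofReal ((2:ℝ) ^ ((n:ℝ)*p)),
    ENNReal.mul_ne_top hCK ENNReal.ofReal_ne_top, ?_⟩
  intro R hR
  have hR0 : (0:ℝ) < R := by linarith
  set J : ℕ := ⌈Real.logb 2 R⌉₊ with hJ
  have hlogb0 : 0 ≤ Real.logb 2 R := Real.logb_nonneg (by norm_num) hR
  have h1 : R ≤ 2 ^ (J:ℝ) := by
    calc R = 2 ^ (Real.logb 2 R) := (Real.rpow_logb (by norm_num) (by norm_num) hR0).symm
    _ ≤ 2 ^ (J:ℝ) := Real.rpow_le_rpow_of_exponent_le (by norm_num) (Nat.le_ceil _)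
  have h2 : (2:ℝ) ^ (J:ℝ) ≤ 2 * R := by
    have hJle : (J:ℝ) ≤ Real.logb 2 R + 1 := (Nat.ceil_lt_add_one hlogb0).le
    calc (2:ℝ)^(J:ℝ) ≤ 2 ^ (Real.logb 2 R + 1) :=
      Real.rpow_le_rpow_of_exponent_le (by norm_num) hJle
    _ = 2 ^ (Real.logb 2 R) * 2 := by
        rw [Real.rpow_add (by norm_num : (0:ℝ) < 2), Real.rpow_one]
    _ = 2 * R := by rw [Real.rpow_logb (by norm_num) (by norm_num) hR0]; ring
  calc ∫⁻ x in ball (0 : Rn n) R, ENNReal.ofReal ((1 + ‖x‖) ^ (-((n:ℝ) * (1 - p))))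
      ≤ ∫⁻ x in ball (0 : Rn n) ((2:ℝ) ^ (J:ℝ)),
          ENNReal.ofReal ((1 + ‖x‖) ^ (-((n:ℝ) * (1 - p)))) :=
        lintegral_mono_set (ball_subset_ball h1)
  _ ≤ CK * ENNReal.ofReal (((2:ℝ) ^ (J:ℝ)) ^ ((n:ℝ) * p)) := h J
  _ ≤ CK * ENNReal.ofReal ((2 * R) ^ ((n:ℝ) * p)) := by
      apply mul_le_mul_right
      apply ENNReal.ofReal_le_ofReal
      exact Real.rpow_le_rpow (by positivity) h2 hnp0
  _ = CK * ENNReal.ofReal ((2:ℝ) ^ ((n:ℝ)*p)) * ENNReal.ofReal (R ^ ((n:ℝ) * p)) := by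
      rw [Real.mul_rpow (by norm_num) hR0.le,
        ENNReal.ofReal_mul (by positivity), mul_assoc]

lemma continuous_Wp (hp0 : 0 ≤ p) (hp1 : p ≠ 1) : Continuous fun x : Rn n => Wp n p x := by
  have hbase : Continuous fun x : Rn n => (1:ℝ) + ‖x‖ := continuous_const.add continuous_norm
  have h1 : Continuous fun x : Rn n => (1 + ‖x‖) ^ ((n:ℝ)*(1-p)) :=
    hbase.rpow_const (fun x => Or.inl (by have := norm_nonneg x; positivity))
  have hlog : Continuous fun x : Rn n => Real.log (Real.exp 1 + ‖x‖) :=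
    (continuous_const.add continuous_norm).log
      (fun x => (add_pos_of_pos_of_nonneg (Real.exp_pos 1) (norm_nonneg x)).ne')
  have h2 : Continuous fun x : Rn n => Lf n p x := by
    unfold Lf
    split_ifs with h
    · exact hlog.rpow_const
        (fun x => Or.inl (by have := one_le_log_exp_add (norm_nonneg x); linarith))
    · exact continuous_const
  have h3 : Continuous fun x : Rn n =>
      ((1 + ‖x‖) ^ ((n:ℝ)*(1-p)) * Lf n p x)⁻¹ := by
    apply (h1.mul h2).inv₀
    intro x
    have hb : (0:ℝ) < (1 + ‖x‖) ^ ((n:ℝ)*(1-p)) :=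
      Real.rpow_pos_of_pos (by have := norm_nonneg x; linarith) _
    have hl : (0:ℝ) < Lf n p x := lt_of_lt_of_le one_pos (one_le_Lf hp0 x)
    exact mul_ne_zero hb.ne' hl.ne'
  have heq : (fun x : Rn n => Wp n p x)
      = fun x => ((1 + ‖x‖) ^ ((n:ℝ)*(1-p)) * Lf n p x)⁻¹ :=
    funext fun x => Wp_eq_inv hp1 x
  rw [heq]
  exact h3

lemma Phi_zero (x : Rn n) : Phi n p x 0 = 0 := by
  unfold Phi
  split_ifs with h <;> rw [zero_div]

lemma lux_integral_eq (hp1 : p ≠ 1) (B : Set (Rn n)) (hB : MeasurableSet B)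
    {lam : ℝ≥0∞} (h0 : lam ≠ 0) :
    ∫⁻ x, PhiE n p x (chi n B x / lam)
      = ∫⁻ x in B, ENNReal.ofReal (Phi n p x (lam.toReal)⁻¹) := by
  have key : ∀ x, PhiE n p x (chi n B x / lam)
      = B.indicator (fun x => ENNReal.ofReal (Phi n p x (lam.toReal)⁻¹)) x := by
    intro x
    by_cases hx : x ∈ B
    · rw [Set.indicator_of_mem hx]
      have hchi : chi n B x = 1 := by unfold chi; rw [Set.indicator_of_mem hx]
      rw [hchi]
      have hne : (1:ℝ≥0∞)/lam ≠ ⊤ := by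
        rw [one_div]; exact ENNReal.inv_ne_top.mpr h0
      unfold PhiE
      rw [if_neg hne]
      congr 1
      rw [one_div, ENNReal.toReal_inv]
    · rw [Set.indicator_of_notMem hx]
      have hchi : chi n B x = 0 := by unfold chi; rw [Set.indicator_of_notMem hx]
      rw [hchi, ENNReal.zero_div]
      unfold PhiE
      rw [if_neg (by simp : (0:ℝ≥0∞) ≠ ⊤), ENNReal.toReal_zero, Phi_zero,
        ENNReal.ofReal_zero]
  rw [lintegral_congr key, lintegral_indicator hB]

end S13

namespace S13

open Metric

variable {n : ℕ} {p : ℝ}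

theorem norm_comparison (hn : 1 ≤ n) (hp0 : 0 < p) (hp1 : p < 1) :
    ∃ C : ℝ, 1 ≤ C ∧ ∀ (c : Rn n) (r : ℝ), 0 < r →
      luxPhiNorm n p (chi n (ball c r)) ≤ wNorm n p (chi n (ball c r)) ∧
      wNorm n p (chi n (ball c r)) ≤ ENNReal.ofReal C * luxPhiNorm n p (chi n (ball c r)) := by
  have hnR : (0:ℝ) < n := by exact_mod_cast hn
  have hnne : (n:ℝ) ≠ 0 := hnR.ne'
  have h1p : (0:ℝ) < 1 - p := by linarith
  have hα0 : (0:ℝ) < (n:ℝ)*(1-p) := by positivity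
  obtain ⟨C5, hC5top, hC5⟩ := ball_int_bound hn hp0 hp1
  have hKc := Kc_pos (p := p) hp1
  have hC4pos : 0 < Kc p + 1 + C5.toReal := by
    have : (0:ℝ) ≤ C5.toReal := ENNReal.toReal_nonneg
    linarith
  set Cr : ℝ := max 1 ((Kc p + 1 + C5.toReal) ^ (1/p)) with hCr
  have hCr1 : (1:ℝ) ≤ Cr := le_max_left _ _
  refine ⟨Cr, hCr1, ?_⟩
  intro c r hr
  set B := ball c r with hB
  have hBmeas : MeasurableSet B := by rw [hB]; exact measurableSet_ball
  set S : ℝ≥0∞ := ∫⁻ x in B, ENNReal.ofReal (Wp n p x) with hS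
  have hWmeas : Measurable fun x : Rn n => ENNReal.ofReal (Wp n p x) :=
    ENNReal.measurable_ofReal.comp (continuous_Wp hp0.le hp1.ne).measurable
  have hStop : S ≠ ⊤ := by
    have hle : S ≤ volume B := by
      rw [hS]
      calc ∫⁻ x in B, ENNReal.ofReal (Wp n p x) ≤ ∫⁻ _ in B, 1 := by
            apply setLIntegral_mono measurable_const
            intro x _
            exact ENNReal.ofReal_le_one.mpr (Wp_le_one hα0.le hp0.le hp1.ne x)
      _ = volume B := by rw [setLIntegral_const, one_mul]
    rw [hB] at hle
    exact (lt_of_le_of_lt hle measure_ball_lt_top).ne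
  have hSpos : 0 < S := by
    set M0 : ℝ := ‖c‖ + r with hM0
    have hM0pos : 0 < M0 := by have := norm_nonneg c; rw [hM0]; linarith
    set w0 : ℝ := ((1 + M0) ^ ((n:ℝ)*(1-p)) * (Real.log (Real.exp 1 + M0)) ^ p)⁻¹ with hw0
    have hlogM : (1:ℝ) ≤ Real.log (Real.exp 1 + M0) := one_le_log_exp_add hM0pos.le
    have hw0pos : 0 < w0 := by
      rw [hw0]
      have hh1 : (0:ℝ) < (1 + M0) ^ ((n:ℝ)*(1-p)) := Real.rpow_pos_of_pos (by linarith) _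
      have hh2 : (0:ℝ) < (Real.log (Real.exp 1 + M0)) ^ p :=
        Real.rpow_pos_of_pos (by linarith) _
      positivity
    have hWlow : ∀ x ∈ B, w0 ≤ Wp n p x := by
      intro x hx
      have hxM : ‖x‖ ≤ M0 := by
        rw [hB, mem_ball, dist_eq_norm] at hx
        calc ‖x‖ = ‖x - c + c‖ := by congr 1; abel
        _ ≤ ‖x - c‖ + ‖c‖ := norm_add_le _ _
        _ ≤ M0 := by rw [hM0]; linarith
      rw [Wp_eq_inv hp1.ne x, hw0]
      have hApos : 0 < (1 + ‖x‖) ^ ((n:ℝ)*(1-p)) * Lf n p x := by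
        have hh1 : (0:ℝ) < (1 + ‖x‖) ^ ((n:ℝ)*(1-p)) :=
          Real.rpow_pos_of_pos (by have := norm_nonneg x; linarith) _
        have hh2 : (0:ℝ) < Lf n p x := lt_of_lt_of_le one_pos (one_le_Lf hp0.le x)
        positivity
      apply inv_anti₀ hApos
      have hLf : Lf n p x ≤ (Real.log (Real.exp 1 + M0)) ^ p := by
        unfold Lf
        split_ifs with h
        · apply Real.rpow_le_rpow
            (by have := one_le_log_exp_add (norm_nonneg x); linarith)
            (Real.log_le_log (by have := Real.exp_pos 1; have := norm_nonneg x; linarith)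
              (by linarith)) hp0.le
        · calc (1:ℝ) = 1 ^ p := (Real.one_rpow p).symm
          _ ≤ _ := Real.rpow_le_rpow zero_le_one hlogM hp0.le
      apply mul_le_mul
        (Real.rpow_le_rpow (by have := norm_nonneg x; linarith) (by linarith) hα0.le)
        hLf (le_trans zero_le_one (one_le_Lf hp0.le x)) (by positivity)
    have hlow : ENNReal.ofReal w0 * volume B ≤ S := by
      rw [hS, ← setLIntegral_const B (ENNReal.ofReal w0)]
      exact setLIntegral_mono' hBmeas
        (fun x hx => ENNReal.ofReal_le_ofReal (hWlow x hx))
    refine lt_of_lt_of_le ?_ hlow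
    apply ENNReal.mul_pos (ENNReal.ofReal_pos.mpr hw0pos).ne'
    rw [hB]
    exact (measure_ball_pos volume c hr).ne'
  have hS0 : S ≠ 0 := hSpos.ne'
  have hwNorm : wNorm n p (chi n B) = S ^ (1/p) := by
    unfold wNorm
    congr 1
    have key : ∀ x, chi n B x ^ p * ENNReal.ofReal (Wp n p x)
        = B.indicator (fun x => ENNReal.ofReal (Wp n p x)) x := by
      intro x
      by_cases hx : x ∈ B
      · rw [Set.indicator_of_mem hx]
        have hc : chi n B x = 1 := by unfold chi; rw [Set.indicator_of_mem hx]
        rw [hc, ENNReal.one_rpow, one_mul]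
      · rw [Set.indicator_of_notMem hx]
        have hc : chi n B x = 0 := by unfold chi; rw [Set.indicator_of_notMem hx]
        rw [hc, ENNReal.zero_rpow_of_pos hp0, zero_mul]
    rw [lintegral_congr key, lintegral_indicator hBmeas]
  rw [hwNorm]
  constructor
  · -- easy direction
    apply sInf_le
    have hν0 : S ^ (1/p) ≠ 0 := (ENNReal.rpow_pos hSpos hStop).ne'
    refine ⟨ENNReal.rpow_pos hSpos hStop, ?_⟩
    rw [lux_integral_eq hp1.ne B hBmeas hν0]
    set s0 : ℝ := S.toReal with hs0
    have hs0pos : 0 < s0 := ENNReal.toReal_pos hS0 hStop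
    set t : ℝ := (s0 ^ (1/p))⁻¹ with htdef
    have ht0 : 0 < t := by
      rw [htdef]
      have := Real.rpow_pos_of_pos hs0pos (1/p)
      positivity
    have htval : ((S ^ (1/p)).toReal)⁻¹ = t := by
      rw [htdef, hs0, ENNReal.toReal_rpow]
    calc ∫⁻ x in B, ENNReal.ofReal (Phi n p x ((S ^ (1/p)).toReal)⁻¹)
        = ∫⁻ x in B, ENNReal.ofReal (Phi n p x t) := by rw [htval]
    _ ≤ ∫⁻ x in B, ENNReal.ofReal (t ^ p) * ENNReal.ofReal (Wp n p x) := by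
        apply setLIntegral_mono (hWmeas.const_mul _)
        intro x _
        rw [← ENNReal.ofReal_mul (by positivity)]
        exact ENNReal.ofReal_le_ofReal (Phi_le hα0.le hp0 hp1 x ht0.le)
    _ = ENNReal.ofReal (t ^ p) * S := lintegral_const_mul' _ _ ENNReal.ofReal_ne_top
    _ = 1 := by
        have htp : t ^ p = s0⁻¹ := by
          rw [htdef, Real.inv_rpow (Real.rpow_nonneg hs0pos.le _),
            ← Real.rpow_mul hs0pos.le, one_div_mul_cancel hp0.ne', Real.rpow_one]
        rw [htp, ENNReal.ofReal_inv_of_pos hs0pos, hs0, ENNReal.ofReal_toReal hStop]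
        exact ENNReal.inv_mul_cancel hS0 hStop
  · -- hard direction
    have hstep : ∀ lam : ℝ≥0∞, 0 < lam →
        (∫⁻ x, PhiE n p x (chi n B x / lam)) ≤ 1 →
        S ^ (1/p) ≤ ENNReal.ofReal Cr * lam := by
      intro lam hlam0 hlamint
      by_cases hlamtop : lam = ⊤
      · rw [hlamtop, ENNReal.mul_top (ENNReal.ofReal_pos.mpr (by linarith)).ne']
        exact le_top
      · set l : ℝ := lam.toReal with hldef
        have hl0 : 0 < l := ENNReal.toReal_pos hlam0.ne' hlamtop
        set t : ℝ := l⁻¹ with htdef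
        have ht0 : 0 < t := by rw [htdef]; positivity
        have h1 : ∫⁻ x in B, ENNReal.ofReal (Phi n p x t) ≤ 1 := by
          rw [htdef, hldef, ← lux_integral_eq hp1.ne B hBmeas hlam0.ne']
          exact hlamint
        set m : Rn n → ℝ := fun x => min (t ^ (1-p)) (Wp n p x) with hmdef
        have hmmeas : Measurable fun x => ENNReal.ofReal (m x) :=
          ENNReal.measurable_ofReal.comp
            (measurable_const.min (continuous_Wp hp0.le hp1.ne).measurable)
        set M : ℝ≥0∞ := ∫⁻ x in B, ENNReal.ofReal (m x) with hMdef
        have h2 : ENNReal.ofReal ((Kc p + 1)⁻¹ * t ^ p) * M ≤ 1 := by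
          rw [hMdef, ← lintegral_const_mul' _ _ ENNReal.ofReal_ne_top]
          refine le_trans ?_ h1
          apply setLIntegral_mono' hBmeas
          intro x _
          rw [← ENNReal.ofReal_mul (by positivity)]
          apply ENNReal.ofReal_le_ofReal
          calc (Kc p + 1)⁻¹ * t ^ p * m x = (Kc p + 1)⁻¹ * (m x * t ^ p) := by ring
          _ ≤ Phi n p x t := Phi_ge hα0.le hp0 hp1 x ht0
        have h3 : M ≤ ENNReal.ofReal ((Kc p + 1) * t ^ (-p)) := by
          have hcpos : 0 < (Kc p + 1)⁻¹ * t ^ p := by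
            have := Real.rpow_pos_of_pos ht0 p
            positivity
          have hMle : M ≤ (ENNReal.ofReal ((Kc p + 1)⁻¹ * t ^ p))⁻¹ :=
            ENNReal.le_inv_iff_mul_le.mpr (by rw [mul_comm]; exact h2)
          refine hMle.trans (le_of_eq ?_)
          rw [← ENNReal.ofReal_inv_of_pos hcpos]
          congr 1
          rw [mul_inv, inv_inv, ← Real.rpow_neg ht0.le]
        have hEmeas : MeasurableSet {y : Rn n | t ^ (1-p) < Wp n p y} :=
          measurableSet_lt measurable_const (continuous_Wp hp0.le hp1.ne).measurable
        have hsplit : S ≤ M + ∫⁻ x in B,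
            Set.indicator {y : Rn n | t ^ (1-p) < Wp n p y}
              (fun y => ENNReal.ofReal (Wp n p y)) x := by
          rw [hS, hMdef, ← lintegral_add_left hmmeas]
          apply lintegral_mono
          intro x
          show ENNReal.ofReal (Wp n p x) ≤ ENNReal.ofReal (m x) +
            Set.indicator {y : Rn n | t ^ (1-p) < Wp n p y}
              (fun y => ENNReal.ofReal (Wp n p y)) x
          by_cases hx : t ^ (1-p) < Wp n p x
          · rw [Set.indicator_of_mem (by exact hx)]
            exact le_add_self
          · rw [Set.indicator_of_notMem (by exact hx)]
            have hmx : m x = Wp n p x := min_eq_right (not_lt.mp hx)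
            rw [hmx, add_zero]
        have htail : ∫⁻ x in B, Set.indicator {y : Rn n | t ^ (1-p) < Wp n p y}
              (fun y => ENNReal.ofReal (Wp n p y)) x ≤ C5 * ENNReal.ofReal (t ^ (-p)) := by
          rw [lintegral_indicator hEmeas, Measure.restrict_restrict hEmeas]
          have hmono : ∫⁻ x in {y : Rn n | t ^ (1-p) < Wp n p y} ∩ B,
              ENNReal.ofReal (Wp n p x)
              ≤ ∫⁻ x in {y : Rn n | t ^ (1-p) < Wp n p y}, ENNReal.ofReal (Wp n p x) :=
            lintegral_mono_set Set.inter_subset_left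
          refine hmono.trans ?_
          rcases le_or_gt 1 t with htge | htlt
          · have hE : {y : Rn n | t ^ (1-p) < Wp n p y} = ∅ := by
              ext y
              simp only [Set.mem_setOf_eq, Set.mem_empty_iff_false, iff_false, not_lt]
              calc Wp n p y ≤ 1 := Wp_le_one hα0.le hp0.le hp1.ne y
              _ ≤ t ^ (1-p) := by
                  calc (1:ℝ) = 1 ^ (1-p) := (Real.one_rpow _).symm
                  _ ≤ t ^ (1-p) := Real.rpow_le_rpow zero_le_one htge h1p.le
            rw [hE]
            simp
          · set R : ℝ := t ^ (-(n:ℝ)⁻¹) with hRdef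
            have hR1 : 1 ≤ R := by
              rw [hRdef]
              exact Real.one_le_rpow_of_pos_of_le_one_of_nonpos ht0 htlt.le
                (neg_nonpos.mpr (by positivity))
            have hR0 : (0:ℝ) < R := by linarith
            have hRα : R ^ ((n:ℝ)*(1-p)) = t ^ (-(1-p)) := by
              rw [hRdef, ← Real.rpow_mul ht0.le]
              congr 1
              field_simp
            have hsub : {y : Rn n | t ^ (1-p) < Wp n p y} ⊆ ball (0:Rn n) R := by
              intro y hy
              have hy' : t ^ (1-p) < Wp n p y := hy
              rw [mem_ball, dist_zero_right]
              by_contra hcon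
              push_neg at hcon
              have hbase : R ≤ 1 + ‖y‖ := by linarith
              have h5 : t ^ (1-p) < (1 + ‖y‖) ^ (-((n:ℝ)*(1-p))) :=
                lt_of_lt_of_le hy' (Wp_le_pow hα0.le hp0.le hp1.ne y)
              have h6 : (1 + ‖y‖) ^ (-((n:ℝ)*(1-p))) ≤ R ^ (-((n:ℝ)*(1-p))) :=
                Real.rpow_le_rpow_of_nonpos hR0 hbase (by linarith)
              have h7 : R ^ (-((n:ℝ)*(1-p))) = t ^ (1-p) := by
                rw [Real.rpow_neg hR0.le, hRα, Real.rpow_neg ht0.le, inv_inv]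
              have := lt_of_lt_of_le h5 (h6.trans_eq h7)
              exact lt_irrefl _ this
            calc ∫⁻ x in {y : Rn n | t ^ (1-p) < Wp n p y}, ENNReal.ofReal (Wp n p x)
                ≤ ∫⁻ x in {y : Rn n | t ^ (1-p) < Wp n p y},
                    ENNReal.ofReal ((1 + ‖x‖) ^ (-((n:ℝ)*(1-p)))) :=
                  setLIntegral_mono' hEmeas (fun x _ =>
                    ENNReal.ofReal_le_ofReal (Wp_le_pow hα0.le hp0.le hp1.ne x))
            _ ≤ ∫⁻ x in ball (0:Rn n) R,
                    ENNReal.ofReal ((1 + ‖x‖) ^ (-((n:ℝ)*(1-p)))) :=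
                  lintegral_mono_set hsub
            _ ≤ C5 * ENNReal.ofReal (R ^ ((n:ℝ)*p)) := hC5 R hR1
            _ = C5 * ENNReal.ofReal (t ^ (-p)) := by
                congr 2
                rw [hRdef, ← Real.rpow_mul ht0.le]
                congr 1
                field_simp
        have hfinal : S ≤ (ENNReal.ofReal (Kc p + 1) + C5) * ENNReal.ofReal (t ^ (-p)) := by
          calc S ≤ M + ∫⁻ x in B, Set.indicator {y : Rn n | t ^ (1-p) < Wp n p y}
                (fun y => ENNReal.ofReal (Wp n p y)) x := hsplit
          _ ≤ ENNReal.ofReal ((Kc p + 1) * t ^ (-p)) + C5 * ENNReal.ofReal (t ^ (-p)) :=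
                add_le_add h3 htail
          _ = (ENNReal.ofReal (Kc p + 1) + C5) * ENNReal.ofReal (t ^ (-p)) := by
                rw [ENNReal.ofReal_mul (by linarith), add_mul]
        have hlp : ENNReal.ofReal (t ^ (-p)) = lam ^ p := by
          have hinv : t ^ (-p) = l ^ p := by
            rw [htdef, Real.inv_rpow hl0.le, Real.rpow_neg hl0.le, inv_inv]
          rw [hinv, ← ENNReal.ofReal_rpow_of_pos hl0, hldef, ENNReal.ofReal_toReal hlamtop]
        rw [hlp] at hfinal
        have h8 : S ^ (1/p) ≤ ((ENNReal.ofReal (Kc p + 1) + C5) * lam ^ p) ^ (1/p) :=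
          ENNReal.rpow_le_rpow hfinal (by positivity)
        rw [ENNReal.mul_rpow_of_nonneg _ _ (by positivity), ← ENNReal.rpow_mul,
          (by field_simp : p * (1/p) = 1), ENNReal.rpow_one] at h8
        refine h8.trans (mul_le_mul_left ?_ lam)
        have hsum : ENNReal.ofReal (Kc p + 1) + C5
            = ENNReal.ofReal (Kc p + 1 + C5.toReal) := by
          rw [ENNReal.ofReal_add (by linarith) ENNReal.toReal_nonneg,
            ENNReal.ofReal_toReal hC5top]
        rw [hsum, ENNReal.ofReal_rpow_of_pos hC4pos]
        exact ENNReal.ofReal_le_ofReal (le_max_right _ _)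
    have hCr0 : ENNReal.ofReal Cr ≠ 0 := (ENNReal.ofReal_pos.mpr (by linarith)).ne'
    have hdiv : S ^ (1/p) / ENNReal.ofReal Cr ≤ luxPhiNorm n p (chi n B) := by
      apply le_sInf
      rintro lam ⟨hlam0, hlamint⟩
      exact ENNReal.div_le_of_le_mul (by rw [mul_comm]; exact hstep lam hlam0 hlamint)
    have := (ENNReal.div_le_iff_le_mul (Or.inl hCr0)
      (Or.inl ENNReal.ofReal_ne_top)).mp hdiv
    rwa [mul_comm] at this

end S13


namespace S13

lemma atom_transfer {n s : ℕ} {N₁ N₂ : ℝ≥0∞} {B : Set (Rn n)} {a : Rn n → ℂ} {C : ℝ}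
    (hC : 1 ≤ C) (hN : N₂ ≤ ENNReal.ofReal C * N₁)
    (ha : IsAtom' n s N₁ B a) : IsAtom' n s N₂ B (fun x => (C : ℂ)⁻¹ * a x) := by
  obtain ⟨hmeas, hsupp, hbound, hmom⟩ := ha
  have hC0 : (0:ℝ) < C := by linarith
  refine ⟨hmeas.const_mul _, ?_, ?_, ?_⟩
  · intro x hx
    simp [hsupp x hx]
  · filter_upwards [hbound] with x hx
    have hnn : (‖(C : ℂ)⁻¹ * a x‖₊ : ℝ≥0∞) = (ENNReal.ofReal C)⁻¹ * (‖a x‖₊ : ℝ≥0∞) := by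
      rw [nnnorm_mul, ENNReal.coe_mul]
      congr 1
      rw [← enorm_eq_nnnorm, ← ofReal_norm, norm_inv, Complex.norm_real, Real.norm_eq_abs,
        abs_of_pos hC0, ENNReal.ofReal_inv_of_pos hC0]
    rw [hnn]
    calc (ENNReal.ofReal C)⁻¹ * (‖a x‖₊ : ℝ≥0∞) ≤ (ENNReal.ofReal C)⁻¹ * N₁⁻¹ :=
          mul_le_mul_right hx _
    _ = (ENNReal.ofReal C * N₁)⁻¹ := by
        rw [ENNReal.mul_inv (Or.inl (ENNReal.ofReal_pos.mpr hC0).ne')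
          (Or.inl ENNReal.ofReal_ne_top)]
    _ ≤ N₂⁻¹ := ENNReal.inv_le_inv.mpr hN
  · intro α hα
    have h1 : ∀ x : Rn n, (C : ℂ)⁻¹ * a x * ∏ i, ((x i : ℝ) : ℂ) ^ (α i)
        = (C : ℂ)⁻¹ * (a x * ∏ i, ((x i : ℝ) : ℂ) ^ (α i)) := fun x => mul_assoc _ _ _
    calc (∫ x : Rn n, (C : ℂ)⁻¹ * a x * ∏ i, ((x i : ℝ) : ℂ) ^ (α i))
        = ∫ x : Rn n, (C : ℂ)⁻¹ * (a x * ∏ i, ((x i : ℝ) : ℂ) ^ (α i)) := by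
          simp_rw [h1]
    _ = (C : ℂ)⁻¹ * ∫ x : Rn n, a x * ∏ i, ((x i : ℝ) : ℂ) ^ (α i) :=
          integral_const_mul _ _
    _ = 0 := by rw [hmom α hα, mul_zero]

end S13

/-- For `p ∈ (0,1)` and `s ≥ ⌊n(1/p-1)⌋`, `(Φ_p,∞,s)`-atoms and `(p,∞,s)_{W_p}`-atoms
coincide up to a uniform constant. -/
theorem statement13 (n : ℕ) (hn : 1 ≤ n) (p : ℝ) (hp0 : 0 < p) (hp1 : p < 1)
    (s : ℕ) (hs : ⌊(n : ℝ) * (1 / p - 1)⌋₊ ≤ s) :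
    ∃ C : ℝ, 1 ≤ C ∧ ∀ (c : Rn n) (r : ℝ), 0 < r →
      (∀ a : Rn n → ℂ,
        IsAtom' n s (luxPhiNorm n p (chi n (Metric.ball c r))) (Metric.ball c r) a →
        IsAtom' n s (wNorm n p (chi n (Metric.ball c r))) (Metric.ball c r)
          (fun x => (C : ℂ)⁻¹ * a x)) ∧
      (∀ a : Rn n → ℂ,
        IsAtom' n s (wNorm n p (chi n (Metric.ball c r))) (Metric.ball c r) a →
        IsAtom' n s (luxPhiNorm n p (chi n (Metric.ball c r))) (Metric.ball c r)
          (fun x => (C : ℂ)⁻¹ * a x)) := by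
  obtain ⟨C, hC1, hcomp⟩ := S13.norm_comparison hn hp0 hp1
  refine ⟨C, hC1, ?_⟩
  intro c r hr
  obtain ⟨h1, h2⟩ := hcomp c r hr
  constructor
  · intro a ha
    exact S13.atom_transfer hC1 h2 ha
  · intro a ha
    refine S13.atom_transfer hC1 ?_ ha
    calc luxPhiNorm n p (chi n (Metric.ball c r)) ≤ wNorm n p (chi n (Metric.ball c r)) := h1
    _ = 1 * wNorm n p (chi n (Metric.ball c r)) := (one_mul _).symm
    _ ≤ ENNReal.ofReal C * wNorm n p (chi n (Metric.ball c r)) :=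
        mul_le_mul_left (ENNReal.one_le_ofReal.mpr hC1) _
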